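/- Let x₁⁽¹⁾, x₁⁽²⁾ : ℝ≥0 → ℝ be two nonnegative differentiable functions satisfying ẋ₁⁽ⁱ⁾ = -2k·(x₁⁽ⁱ⁾)² + w⁽ⁱ⁾ with k > 0, and suppose x₁⁽¹⁾(t) + x₁⁽²⁾(t) ≥ c₀ > 0 for all t. Then |x₁⁽¹⁾(t) - x₁⁽²⁾(t)| ≤ |x₁⁽¹⁾(0) - x₁⁽²⁾(0)|·e^{-2k·c₀·t} + (1/(2k·c₀))·sup_{0≤τ≤t}|w⁽¹⁾(τ) - w⁽²⁾(τ)| for all t ≥ 0. -/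

import Mathlib

open Set Real Filter Topology

/-- incremental contraction for the reactor's first state:
if `ẋ₁⁽ⁱ⁾ = -2k (x₁⁽ⁱ⁾)² + w⁽ⁱ⁾` with `k > 0`, both solutions nonnegative and
`x₁⁽¹⁾(t) + x₁⁽²⁾(t) ≥ c₀ > 0`, then
`|x₁⁽¹⁾(t) - x₁⁽²⁾(t)| ≤ |x₁⁽¹⁾(0) - x₁⁽²⁾(0)| e^{-2kc₀t} + (1/(2kc₀)) sup_{[0,t]}|δw|`. -/
theorem reactor_first_state_contraction (k c₀ : ℝ) (hk : 0 < k) (hc₀ : 0 < c₀)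
    (x₁ x₂ w₁ w₂ : ℝ → ℝ)
    (hx₁nn : ∀ t ≥ (0 : ℝ), 0 ≤ x₁ t) (hx₂nn : ∀ t ≥ (0 : ℝ), 0 ≤ x₂ t)
    (hx₁ : ∀ t ≥ (0 : ℝ), HasDerivAt x₁ (-2 * k * (x₁ t) ^ 2 + w₁ t) t)
    (hx₂ : ∀ t ≥ (0 : ℝ), HasDerivAt x₂ (-2 * k * (x₂ t) ^ 2 + w₂ t) t)
    (hsum : ∀ t ≥ (0 : ℝ), c₀ ≤ x₁ t + x₂ t) :
    ∀ t ≥ (0 : ℝ), ∀ Wb : ℝ, (∀ τ ∈ Set.Icc 0 t, |w₁ τ - w₂ τ| ≤ Wb) →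
      |x₁ t - x₂ t| ≤
        |x₁ 0 - x₂ 0| * Real.exp (-2 * k * c₀ * t) + Wb / (2 * k * c₀) := by
  intro t ht Wb hWb
  set K : ℝ := -(2 * k * c₀) with hK
  have h2kc : 0 < 2 * k * c₀ := by positivity
  have hWb0 : 0 ≤ Wb := le_trans (abs_nonneg _) (hWb 0 ⟨le_refl _, ht⟩)
  set d : ℝ → ℝ := fun τ => x₁ τ - x₂ τ with hd
  have hder : ∀ τ ≥ (0:ℝ), HasDerivAt d
      (-(2*k) * (x₁ τ + x₂ τ) * d τ + (w₁ τ - w₂ τ)) τ := by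
    intro τ hτ
    have h := (hx₁ τ hτ).sub (hx₂ τ hτ)
    refine HasDerivAt.congr_deriv (f := d) h ?_
    simp only [hd]; ring
  have hcont : ContinuousOn (fun τ => |d τ|) (Icc 0 t) := by
    apply ContinuousOn.abs
    intro τ hτ
    exact ((hder τ hτ.1).continuousAt).continuousWithinAt
  have key := le_gronwallBound_of_liminf_deriv_right_le
      (f := fun τ => |d τ|)
      (f' := fun τ => -(2*k) * (x₁ τ + x₂ τ) * |d τ| + Wb)
      (δ := |d 0|) (K := K) (ε := Wb) (a := 0) (b := t) hcont
      ?_ (le_refl _) ?_ t ⟨ht, le_refl t⟩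
  · -- finish from the Grönwall bound
    rw [gronwallBound_of_K_ne_0 (by nlinarith : K ≠ 0)] at key
    simp only [sub_zero] at key
    have hKt : K * t = -2 * k * c₀ * t := by rw [hK]; ring
    rw [hKt] at key
    refine key.trans (add_le_add_right ?_ _)
    set E : ℝ := Real.exp (-2 * k * c₀ * t) with hE
    have hE0 : 0 < E := Real.exp_pos _
    have hE1 : E ≤ 1 := Real.exp_le_one_iff.mpr (by nlinarith)
    have heq : Wb / K * (E - 1) = Wb * (1 - E) / (2 * k * c₀) := by
      rw [hK]; field_simp; ring
    rw [heq, div_le_div_iff₀ h2kc h2kc]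
    nlinarith [mul_nonneg (mul_nonneg hWb0 hE0.le) h2kc.le]
  · -- the liminf-slope condition
    intro τ hτ r hr
    have hτ0 : (0:ℝ) ≤ τ := hτ.1
    have hdτ : HasDerivAt d (-(2*k) * (x₁ τ + x₂ τ) * d τ + (w₁ τ - w₂ τ)) τ := hder τ hτ0
    set D : ℝ := -(2*k) * (x₁ τ + x₂ τ) * d τ + (w₁ τ - w₂ τ) with hD
    have hslope : Tendsto (slope d τ) (𝓝[>] τ) (𝓝 D) :=
      (hasDerivAt_iff_tendsto_slope.mp hdτ).mono_left
        (nhdsWithin_mono τ (fun z hz => hz.ne'))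
    have hwτ : |w₁ τ - w₂ τ| ≤ Wb := hWb τ ⟨hτ0, le_of_lt hτ.2⟩
    have hcd : ContinuousAt d τ := hdτ.continuousAt
    rcases lt_trichotomy (d τ) 0 with hneg | hzero | hpos
    · -- d τ < 0 : |d| = -d near τ
      have hDr : -D < r := by
        have : -D = -(2*k) * (x₁ τ + x₂ τ) * |d τ| - (w₁ τ - w₂ τ) := by
          rw [abs_of_neg hneg]; ring
        have h2 : -(w₁ τ - w₂ τ) ≤ Wb := (neg_le_abs _).trans hwτ
        calc -D ≤ -(2*k) * (x₁ τ + x₂ τ) * |d τ| + Wb := by rw [this]; linarith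
        _ < r := hr
      have hev1 : ∀ᶠ z in 𝓝[>] τ, d z < 0 :=
        ((hcd : Filter.Tendsto d (𝓝 τ) (𝓝 (d τ))).eventually_lt_const hneg).filter_mono
          nhdsWithin_le_nhds
      have hev2 : ∀ᶠ z in 𝓝[>] τ, -slope d τ z < r :=
        hslope.neg.eventually_lt_const hDr
      refine ((hev1.and (hev2.and self_mem_nhdsWithin)).mono ?_).frequently
      rintro z ⟨hz1, hz2, hz3⟩
      have hzτ : (0:ℝ) < z - τ := sub_pos.mpr hz3
      have : (z - τ)⁻¹ * (|d z| - |d τ|) = -slope d τ z := by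
        rw [abs_of_neg hz1, abs_of_neg hneg, slope_def_field]
        field_simp
        ring
      rw [this]; exact hz2
    · -- d τ = 0
      have hDr : |D| < r := by
        have : |D| = |w₁ τ - w₂ τ| := by rw [hD, hzero]; ring_nf
        calc |D| ≤ Wb := this ▸ hwτ
        _ ≤ -(2*k) * (x₁ τ + x₂ τ) * |d τ| + Wb := by
              rw [hzero]; simp
        _ < r := hr
      have hev2 : ∀ᶠ z in 𝓝[>] τ, |slope d τ z| < r :=
        hslope.abs.eventually_lt_const hDr
      refine ((hev2.and self_mem_nhdsWithin).mono ?_).frequently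
      rintro z ⟨hz2, hz3⟩
      have hzτ : (0:ℝ) < z - τ := sub_pos.mpr hz3
      have heq2 : |slope d τ z| = (z - τ)⁻¹ * (|d z| - |d τ|) := by
        rw [slope_def_field, hzero, sub_zero, abs_zero, sub_zero, abs_div,
          abs_of_pos hzτ, div_eq_inv_mul]
      rw [← heq2]
      exact hz2
    · -- d τ > 0
      have hDr : D < r := by
        have : D = -(2*k) * (x₁ τ + x₂ τ) * |d τ| + (w₁ τ - w₂ τ) := by
          rw [abs_of_pos hpos]
        have h2 : w₁ τ - w₂ τ ≤ Wb := (le_abs_self _).trans hwτ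
        calc D ≤ -(2*k) * (x₁ τ + x₂ τ) * |d τ| + Wb := by rw [this]; linarith
        _ < r := hr
      have hev1 : ∀ᶠ z in 𝓝[>] τ, 0 < d z :=
        ((hcd : Filter.Tendsto d (𝓝 τ) (𝓝 (d τ))).eventually_const_lt hpos).filter_mono
          nhdsWithin_le_nhds
      have hev2 : ∀ᶠ z in 𝓝[>] τ, slope d τ z < r :=
        hslope.eventually_lt_const hDr
      refine ((hev1.and (hev2.and self_mem_nhdsWithin)).mono ?_).frequently
      rintro z ⟨hz1, hz2, hz3⟩
      have hzτ : (0:ℝ) < z - τ := sub_pos.mpr hz3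
      have : (z - τ)⁻¹ * (|d z| - |d τ|) = slope d τ z := by
        rw [abs_of_pos hz1, abs_of_pos hpos, slope_def_field]
        field_simp
      rw [this]; exact hz2
  · -- the bound f' ≤ K f + ε
    intro τ hτ
    have hs : c₀ ≤ x₁ τ + x₂ τ := hsum τ hτ.1
    have : -(2*k) * (x₁ τ + x₂ τ) * |d τ| ≤ K * |d τ| := by
      rw [hK]
      apply mul_le_mul_of_nonneg_right _ (abs_nonneg _)
      nlinarith
    show -(2*k) * (x₁ τ + x₂ τ) * |d τ| + Wb ≤ K * |d τ| + Wb
    linarith
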